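/- Suppose (A_m)_{m∈ℕ} admits a polynomial dichotomy with respect to a sequence of norms ‖·‖_m, with projections P_m, constants D, λ > 0. Let Z = Im Q_1 where Q_1 = Id − P_1. Then the operator T_Z : (D(T_Z), ‖·‖_{T_Z}) → Y_0 is bijective, where ‖x‖_{T_Z} = ‖x‖_∞ + ‖T_Z x‖_∞. -/

import Mathlib

open scoped BigOperators

variable {X : Type*} [NormedAddCommGroup X] [NormedSpace ℝ X]

/-- The cocycle generated by a sequence of bounded operators:
`coc A n m = 𝓐(m,n) = A_{m-1} ⋯ A_n` for `m > n`, and `= Id` for `m ≤ n`. -/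
def coc (A : ℕ → X →L[ℝ] X) (n : ℕ) : ℕ → X →L[ℝ] X
  | 0 => 1
  | m + 1 => if n ≤ m then (A m).comp (coc A n m) else 1

/-- The formal difference operator: `(T x)_1 = 0` and
`(T x)_{m+1} = (m+1)(x_{m+1} - A_m x_m)` for `m ≥ 1`. -/
noncomputable def TOp (A : ℕ → X →L[ℝ] X) (x : ℕ → X) : ℕ → X :=
  fun m => if m ≤ 1 then 0 else (m : ℝ) • (x m - A (m - 1) (x (m - 1)))

/-- `N` is a family (indexed by `m ≥ 1`) of norms on `X`, each equivalent to `‖·‖`. -/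
def NormFamily (N : ℕ → X → ℝ) : Prop :=
  ∀ m, 1 ≤ m →
    (∀ x y : X, N m (x + y) ≤ N m x + N m y) ∧
    (∀ (c : ℝ) (x : X), N m (c • x) = |c| * N m x) ∧
    (∃ c C : ℝ, 0 < c ∧ ∀ x : X, c * ‖x‖ ≤ N m x ∧ N m x ≤ C * ‖x‖)

/-- Membership in `Y`: `sup_{m ≥ 1} ‖x_m‖_m < ∞`. -/
def MemY (N : ℕ → X → ℝ) (x : ℕ → X) : Prop :=
  ∃ S : ℝ, ∀ m, 1 ≤ m → N m (x m) ≤ S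

/-- Membership in `Y₀ = Y_{{0}}`: bounded and `x_1 = 0`. -/
def MemY0 (N : ℕ → X → ℝ) (x : ℕ → X) : Prop := x 1 = 0 ∧ MemY N x

/-- Membership in `Y_Z`: bounded and `x_1 ∈ Z`. -/
def MemYZ (N : ℕ → X → ℝ) (Z : Set X) (x : ℕ → X) : Prop := x 1 ∈ Z ∧ MemY N x

/-- Membership in the domain `𝒟(T_Z)`: `x ∈ Y_Z` and
`sup_{m ≥ 1} (m+1)‖x_{m+1} - A_m x_m‖_{m+1} < ∞`. -/
def MemD (A : ℕ → X →L[ℝ] X) (N : ℕ → X → ℝ) (Z : Set X) (x : ℕ → X) : Prop :=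
  MemYZ N Z x ∧ MemY N (TOp A x)

/-- Polynomial dichotomy (with given projections and constants) with respect to the
sequence of norms `N`.  The bound along the unstable direction is stated in the
equivalent "forward" form: `‖u‖_m ≤ D (m/n)^λ ‖𝓐(n,m)u‖_n` for `u ∈ Ker P_m`, `m ≤ n`. -/
def PolyDichWith (A : ℕ → X →L[ℝ] X) (N : ℕ → X → ℝ) (P : ℕ → X →L[ℝ] X)
    (D lam : ℝ) : Prop :=
  (∀ m, 1 ≤ m → (P m).comp (P m) = P m) ∧
  (∀ m, 1 ≤ m → (A m).comp (P m) = (P (m + 1)).comp (A m)) ∧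
  (∀ m, 1 ≤ m → ∀ y, P (m + 1) y = 0 → ∃! x, P m x = 0 ∧ A m x = y) ∧
  (∀ m n, 1 ≤ n → n ≤ m → ∀ x : X,
      N m (coc A n m (P n x)) ≤ D * (((m : ℝ) / (n : ℝ)) ^ (-lam)) * N n x) ∧
  (∀ m n, 1 ≤ m → m ≤ n → ∀ u : X, P m u = 0 →
      N m u ≤ D * (((m : ℝ) / (n : ℝ)) ^ lam) * N n (coc A m n u))

/-- `(A_m)` admits a polynomial dichotomy with respect to the sequence of norms `N`. -/
def PolyDich (A : ℕ → X →L[ℝ] X) (N : ℕ → X → ℝ) : Prop :=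
  ∃ (P : ℕ → X →L[ℝ] X) (D lam : ℝ), 0 < D ∧ 0 < lam ∧ PolyDichWith A N P D lam

lemma coc_succ (A : ℕ → X →L[ℝ] X) {n m : ℕ} (h : n ≤ m) :
    coc A n (m + 1) = (A m).comp (coc A n m) := by simp [coc, h]

lemma coc_self (A : ℕ → X →L[ℝ] X) (n : ℕ) : coc A n n = 1 := by
  cases n with
  | zero => rfl
  | succ m => simp [coc]

lemma coc_comp_apply (A : ℕ → X →L[ℝ] X) {n m k : ℕ} (hnm : n ≤ m) (hmk : m ≤ k) (v : X) :
    coc A m k (coc A n m v) = coc A n k v := by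
  induction k, hmk using Nat.le_induction with
  | base => rw [coc_self]; simp
  | succ k hk ih =>
      rw [coc_succ A (hnm.trans hk), coc_succ A hk]
      simp only [ContinuousLinearMap.comp_apply]
      rw [ih]

lemma NF_zero {Nm : X → ℝ} (hsmul : ∀ (c : ℝ) (x : X), Nm (c • x) = |c| * Nm x) :
    Nm (0 : X) = 0 := by
  have := hsmul 0 0; simpa using this

lemma NF_neg {Nm : X → ℝ} (hsmul : ∀ (c : ℝ) (x : X), Nm (c • x) = |c| * Nm x) (x : X) :
    Nm (-x) = Nm x := by
  have := hsmul (-1) x; simpa using this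

lemma NF_sum_le {Nm : X → ℝ} (hadd : ∀ x y : X, Nm (x + y) ≤ Nm x + Nm y)
    (hsmul : ∀ (c : ℝ) (x : X), Nm (c • x) = |c| * Nm x)
    {ι : Type*} (s : Finset ι) (f : ι → X) :
    Nm (∑ i ∈ s, f i) ≤ ∑ i ∈ s, Nm (f i) :=
  Finset.le_sum_of_subadditive Nm (NF_zero hsmul).le hadd s f

lemma NF_sub_le {Nm : X → ℝ} (hadd : ∀ x y : X, Nm (x + y) ≤ Nm x + Nm y)
    (hsmul : ∀ (c : ℝ) (x : X), Nm (c • x) = |c| * Nm x) (x y : X) :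
    Nm (x - y) ≤ Nm x + Nm y := by
  have h := hadd x (-y)
  rw [NF_neg hsmul] at h
  simpa [sub_eq_add_neg] using h

lemma NF_tsum_le [CompleteSpace X] {Nm : X → ℝ} (hadd : ∀ x y : X, Nm (x + y) ≤ Nm x + Nm y)
    (hsmul : ∀ (c : ℝ) (x : X), Nm (c • x) = |c| * Nm x)
    {C : ℝ} (hC : ∀ x : X, Nm x ≤ C * ‖x‖)
    {t : ℕ → X} (ht : Summable t) {b : ℕ → ℝ} (hb : ∀ k, Nm (t k) ≤ b k)
    {B : ℝ} (hB : ∀ n : ℕ, ∑ k ∈ Finset.range n, b k ≤ B) :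
    Nm (∑' k, t k) ≤ B := by
  have hten : Filter.Tendsto (fun n => ∑ k ∈ Finset.range n, t k) Filter.atTop
      (nhds (∑' k, t k)) := ht.hasSum.tendsto_sum_nat
  have h0 : Filter.Tendsto (fun n => B + C * ‖(∑' k, t k) - ∑ k ∈ Finset.range n, t k‖)
      Filter.atTop (nhds (B + C * 0)) := by
    apply Filter.Tendsto.add tendsto_const_nhds
    apply Filter.Tendsto.const_mul
    have h2 : Filter.Tendsto (fun n => (∑' k, t k) - ∑ k ∈ Finset.range n, t k)
        Filter.atTop (nhds 0) := by
      have := (tendsto_const_nhds (x := ∑' k, t k) (f := Filter.atTop (α := ℕ))).sub hten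
      simpa using this
    simpa using h2.norm
  have hle : ∀ n : ℕ, Nm (∑' k, t k) ≤ B + C * ‖(∑' k, t k) - ∑ k ∈ Finset.range n, t k‖ := by
    intro n
    have h1 : Nm (∑' k, t k) ≤ Nm (∑ k ∈ Finset.range n, t k)
        + Nm ((∑' k, t k) - ∑ k ∈ Finset.range n, t k) := by
      have := hadd (∑ k ∈ Finset.range n, t k) ((∑' k, t k) - ∑ k ∈ Finset.range n, t k)
      simpa using this
    have h2 : Nm (∑ k ∈ Finset.range n, t k) ≤ B :=
      le_trans (NF_sum_le hadd hsmul _ _)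
        (le_trans (Finset.sum_le_sum fun k _ => hb k) (hB n))
    have h3 := hC ((∑' k, t k) - ∑ k ∈ Finset.range n, t k)
    linarith
  have := ge_of_tendsto h0 (Filter.Eventually.of_forall hle)
  simpa using this

lemma mvt_rpow {p a : ℝ} (ha : 0 < a) :
    ∃ c ∈ Set.Ioo a (a + 1), (a + 1) ^ p - a ^ p = p * c ^ (p - 1) := by
  obtain ⟨c, hc, hslope⟩ := exists_hasDerivAt_eq_slope (a := a) (b := a + 1)
      (fun x : ℝ => x ^ p)
      (fun x => p * x ^ (p - 1)) (lt_add_one a)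
      (ContinuousOn.rpow_const continuousOn_id fun x hx =>
        Or.inl (ne_of_gt (lt_of_lt_of_le ha hx.1)))
      (fun x hx => Real.hasDerivAt_rpow_const (Or.inl (ne_of_gt (lt_trans ha hx.1))))
  refine ⟨c, hc, ?_⟩
  rw [hslope]
  have h1 : (a + 1) - a = 1 := by ring
  rw [h1, div_one]

lemma key_tail {lam : ℝ} (hlam : 0 < lam) {a : ℝ} (ha : 1 ≤ a) :
    lam * (a + 1) ^ (-(lam + 1)) ≤ a ^ (-lam) - (a + 1) ^ (-lam) := by
  obtain ⟨c, hc, heq⟩ := mvt_rpow (p := -lam) (a := a) (by linarith)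
  have hcpos : 0 < c := by linarith [hc.1]
  have h1 : a ^ (-lam) - (a + 1) ^ (-lam) = lam * c ^ (-lam - 1) := by
    rw [neg_mul] at heq; linarith
  rw [h1]
  have h2 : (a + 1 : ℝ) ^ (-(lam + 1)) ≤ c ^ (-lam - 1) := by
    rw [show -(lam + 1) = -lam - 1 by ring]
    exact Real.rpow_le_rpow_of_nonpos hcpos hc.2.le (by linarith)
  exact mul_le_mul_of_nonneg_left h2 hlam.le

lemma key_head {lam : ℝ} (hlam : 0 < lam) (hlam1 : lam ≤ 1) {a : ℝ} (ha : 1 ≤ a) :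
    lam * (a + 1) ^ (lam - 1) ≤ (a + 1) ^ lam - a ^ lam := by
  obtain ⟨c, hc, heq⟩ := mvt_rpow (p := lam) (a := a) (by linarith)
  have hcpos : 0 < c := by linarith [hc.1]
  rw [heq]
  exact mul_le_mul_of_nonneg_left
    (Real.rpow_le_rpow_of_nonpos hcpos hc.2.le (by linarith)) hlam.le

lemma tail_sum {lam : ℝ} (hlam : 0 < lam) {m : ℕ} (hm : 1 ≤ m) (n : ℕ) :
    ∑ j ∈ Finset.range n, ((j + m + 1 : ℕ) : ℝ) ^ (-(lam + 1)) ≤ lam⁻¹ * (m : ℝ) ^ (-lam) := by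
  have hm0 : (0:ℝ) < m := by exact_mod_cast hm
  have h2 : lam * ∑ j ∈ Finset.range n, ((j + m + 1 : ℕ) : ℝ) ^ (-(lam + 1)) ≤ (m:ℝ) ^ (-lam) := by
    rw [Finset.mul_sum]
    have hstep : ∀ j ∈ Finset.range n, lam * ((j + m + 1 : ℕ) : ℝ) ^ (-(lam + 1)) ≤
        ((j + m : ℕ) : ℝ) ^ (-lam) - ((j + 1 + m : ℕ) : ℝ) ^ (-lam) := by
      intro j _
      have ha : (1:ℝ) ≤ ((j + m : ℕ) : ℝ) := by
        have : 1 ≤ j + m := by omega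
        exact_mod_cast this
      have h := key_tail hlam ha
      have hc1 : ((j + m : ℕ) : ℝ) + 1 = ((j + m + 1 : ℕ) : ℝ) := by push_cast; ring
      have hc2 : ((j + 1 + m : ℕ) : ℝ) = ((j + m + 1 : ℕ) : ℝ) := by push_cast; ring
      rw [hc1] at h
      rw [hc2]
      exact h
    refine le_trans (Finset.sum_le_sum hstep) ?_
    rw [Finset.sum_range_sub' (fun j => ((j + m : ℕ) : ℝ) ^ (-lam)) n]
    have : (0:ℝ) ≤ ((n + m : ℕ) : ℝ) ^ (-lam) := Real.rpow_nonneg (by positivity) _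
    simp only [zero_add]
    linarith
  rw [inv_mul_eq_div, le_div_iff₀ hlam, mul_comm]
  exact h2

lemma head_sum {lam : ℝ} (hlam : 0 < lam) {m : ℕ} (hm : 1 ≤ m) :
    ∑ k ∈ Finset.Icc 2 m, ((k : ℝ)) ^ (lam - 1) ≤ (1 + lam⁻¹) * (m : ℝ) ^ lam := by
  have hm0 : (0:ℝ) < m := by exact_mod_cast hm
  have hpow : (0:ℝ) ≤ (m:ℝ) ^ lam := Real.rpow_nonneg hm0.le _
  rcases le_or_gt lam 1 with h1 | h1
  · have htel : ∀ n : ℕ, 1 ≤ n →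
        ∑ k ∈ Finset.Icc 2 n, ((k:ℝ) ^ lam - ((k - 1 : ℕ) : ℝ) ^ lam) = (n:ℝ) ^ lam - 1 := by
      intro n hn
      induction n, hn using Nat.le_induction with
      | base => simp [Real.one_rpow, Finset.Icc_eq_empty_of_lt]
      | succ n hn ih =>
          rw [Finset.sum_Icc_succ_top (by omega : 2 ≤ n + 1), ih]
          have hc : (n + 1 - 1 : ℕ) = n := by omega
          rw [hc]
          ring
    have hterm : ∀ k ∈ Finset.Icc 2 m, lam * (k:ℝ) ^ (lam - 1) ≤
        (k:ℝ) ^ lam - ((k - 1 : ℕ) : ℝ) ^ lam := by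
      intro k hk
      have hk2 : 2 ≤ k := (Finset.mem_Icc.mp hk).1
      have ha : (1:ℝ) ≤ ((k - 1 : ℕ) : ℝ) := by
        have : 1 ≤ k - 1 := by omega
        exact_mod_cast this
      have h := key_head hlam h1 ha
      have hc : ((k - 1 : ℕ) : ℝ) + 1 = (k : ℝ) := by
        have : (k - 1 : ℕ) + 1 = k := by omega
        exact_mod_cast congrArg (Nat.cast : ℕ → ℝ) this
      rw [hc] at h
      exact h
    have hsum : lam * ∑ k ∈ Finset.Icc 2 m, (k:ℝ) ^ (lam - 1) ≤ (m:ℝ) ^ lam - 1 := by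
      rw [Finset.mul_sum]
      exact le_trans (Finset.sum_le_sum hterm) (le_of_eq (htel m hm))
    have hs : ∑ k ∈ Finset.Icc 2 m, (k:ℝ) ^ (lam - 1) ≤ ((m:ℝ) ^ lam - 1) / lam := by
      rw [le_div_iff₀ hlam, mul_comm]
      exact hsum
    have hinv : lam⁻¹ * lam = 1 := inv_mul_cancel₀ hlam.ne'
    have h3 : ((m:ℝ) ^ lam - 1) / lam ≤ (1 + lam⁻¹) * (m:ℝ) ^ lam := by
      rw [div_le_iff₀ hlam]
      nlinarith [mul_nonneg hlam.le hpow]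
    linarith
  · have hterm : ∀ k ∈ Finset.Icc 2 m, (k:ℝ) ^ (lam - 1) ≤ (m:ℝ) ^ (lam - 1) := by
      intro k hk
      have hkm : k ≤ m := (Finset.mem_Icc.mp hk).2
      exact Real.rpow_le_rpow (by positivity) (by exact_mod_cast hkm) (by linarith)
    have hcard : ((Finset.Icc 2 m).card : ℝ) ≤ (m : ℝ) := by
      have : (Finset.Icc 2 m).card ≤ m := by
        rw [Nat.card_Icc]; omega
      exact_mod_cast this
    have hmm : (m:ℝ) * (m:ℝ) ^ (lam - 1) = (m:ℝ) ^ lam := by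
      nth_rewrite 1 [← Real.rpow_one (m:ℝ)]
      rw [← Real.rpow_add hm0]
      ring_nf
    have hpow1 : (0:ℝ) ≤ (m:ℝ) ^ (lam - 1) := Real.rpow_nonneg hm0.le _
    calc ∑ k ∈ Finset.Icc 2 m, (k:ℝ) ^ (lam - 1)
        ≤ ∑ _k ∈ Finset.Icc 2 m, (m:ℝ) ^ (lam - 1) := Finset.sum_le_sum hterm
      _ = ((Finset.Icc 2 m).card : ℝ) * (m:ℝ) ^ (lam - 1) := by
          rw [Finset.sum_const, nsmul_eq_mul]
      _ ≤ (m:ℝ) * (m:ℝ) ^ (lam - 1) := mul_le_mul_of_nonneg_right hcard hpow1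
      _ = (m:ℝ) ^ lam := hmm
      _ ≤ (1 + lam⁻¹) * (m:ℝ) ^ lam := by nlinarith [inv_pos.mpr hlam]

lemma ratio_rpow {lam : ℝ} {m k : ℕ} (hm : 1 ≤ m) (hk : 1 ≤ k) :
    (k:ℝ)⁻¹ * ((m:ℝ) / (k:ℝ)) ^ lam = (m:ℝ) ^ lam * (k:ℝ) ^ (-(lam + 1)) := by
  have hk0 : (0:ℝ) < k := by exact_mod_cast hk
  have hm0 : (0:ℝ) ≤ (m:ℝ) := by positivity
  rw [Real.div_rpow hm0 hk0.le, Real.rpow_neg hk0.le, Real.rpow_add hk0, Real.rpow_one]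
  rw [mul_inv, div_eq_mul_inv]
  ring

lemma ratio_rpow' {lam : ℝ} {m k : ℕ} (hm : 1 ≤ m) (hk : 1 ≤ k) :
    (k:ℝ)⁻¹ * ((m:ℝ) / (k:ℝ)) ^ (-lam) = (k:ℝ) ^ (lam - 1) * (m:ℝ) ^ (-lam) := by
  have hk0 : (0:ℝ) < k := by exact_mod_cast hk
  have hm0 : (0:ℝ) < (m:ℝ) := by exact_mod_cast hm
  rw [Real.rpow_neg (by positivity), Real.div_rpow hm0.le hk0.le, Real.rpow_neg hm0.le,
    Real.rpow_sub hk0, Real.rpow_one]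
  have h1 : ((k:ℝ) ^ lam) ≠ 0 := (Real.rpow_pos_of_pos hk0 _).ne'
  have h2 : ((m:ℝ) ^ lam) ≠ 0 := (Real.rpow_pos_of_pos hm0 _).ne'
  field_simp
/-- The solution sequence: `x 1 = x1`, `x (m+1) = A m (x m) + (m+1)⁻¹ • y (m+1)`. -/
noncomputable def sol (A : ℕ → X →L[ℝ] X) (y : ℕ → X) (x1 : X) : ℕ → X
  | 0 => 0
  | 1 => x1
  | m + 2 => A (m + 1) (sol A y x1 (m + 1)) + ((m + 2 : ℕ) : ℝ)⁻¹ • y (m + 2)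

/-- if `(A_m)` admits a polynomial dichotomy with respect to the norms
`‖·‖_m`, with projections `P_m` and constants `D, λ > 0`, then for `Z = Im Q₁`
(`Q₁ = Id − P₁`) the operator `T_Z : (𝒟(T_Z), ‖·‖_{T_Z}) → Y₀` is bijective:
every `y ∈ Y₀` is `T_Z x` for some `x ∈ 𝒟(T_Z)`, and `T_Z` is injective on `𝒟(T_Z)`. -/
theorem stmt4 [CompleteSpace X] (A : ℕ → X →L[ℝ] X) (N : ℕ → X → ℝ)
    (hN : NormFamily N) (P : ℕ → X →L[ℝ] X) (D lam : ℝ)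
    (hD : 0 < D) (hlam : 0 < lam) (hdich : PolyDichWith A N P D lam) :
    (∀ y, MemY0 N y → ∃ x, MemD A N (Set.range fun v : X => v - P 1 v) x ∧
        ∀ m, 1 ≤ m → TOp A x m = y m) ∧
    (∀ x x', MemD A N (Set.range fun v : X => v - P 1 v) x →
        MemD A N (Set.range fun v : X => v - P 1 v) x' →
        (∀ m, 1 ≤ m → TOp A x m = TOp A x' m) → ∀ m, 1 ≤ m → x m = x' m) := by
  obtain ⟨hPP, hAP, hinv, hstab, hunst⟩ := hdich
  have hadd : ∀ m, 1 ≤ m → ∀ x y : X, N m (x + y) ≤ N m x + N m y := fun m hm => (hN m hm).1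
  have hsmul : ∀ m, 1 ≤ m → ∀ (c : ℝ) (x : X), N m (c • x) = |c| * N m x :=
    fun m hm => (hN m hm).2.1
  have hequiv : ∀ m, 1 ≤ m → ∃ c C : ℝ, 0 < c ∧ ∀ x : X, c * ‖x‖ ≤ N m x ∧ N m x ≤ C * ‖x‖ :=
    fun m hm => (hN m hm).2.2
  have hnonneg : ∀ m, 1 ≤ m → ∀ x : X, 0 ≤ N m x := by
    intro m hm x
    obtain ⟨c, C, hc, hcC⟩ := hequiv m hm
    exact le_trans (by positivity) (hcC x).1
  have hker : ∀ m, 1 ≤ m → ∀ u : X, P 1 u = 0 → P m (coc A 1 m u) = 0 := by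
    intro m hm
    induction m, hm using Nat.le_induction with
    | base => intro u hu; rw [coc_self]; simpa using hu
    | succ m hm ih =>
        intro u hu
        rw [coc_succ A hm]
        have h := congrArg (fun (L : X →L[ℝ] X) => L (coc A 1 m u)) (hAP m hm)
        simp only [ContinuousLinearMap.comp_apply] at h ⊢
        rw [← h, ih u hu, map_zero]
  have hback : ∀ k, 1 ≤ k → ∀ v : X, P k v = 0 → ∃ u : X, P 1 u = 0 ∧ coc A 1 k u = v := by
    intro k hk
    induction k, hk using Nat.le_induction with
    | base => intro v hv; exact ⟨v, hv, by rw [coc_self]; simp⟩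
    | succ k hk ih =>
        intro v hv
        obtain ⟨w, ⟨hw1, hw2⟩, -⟩ := hinv k hk v hv
        obtain ⟨u, hu1, hu2⟩ := ih w hw1
        refine ⟨u, hu1, ?_⟩
        rw [coc_succ A hk]
        simp only [ContinuousLinearMap.comp_apply]
        rw [hu2, hw2]
  have hNP : ∀ k, 1 ≤ k → ∀ v : X, N k (P k v) ≤ D * N k v := by
    intro k hk v
    have h := hstab k k hk le_rfl v
    have hkpos : (0:ℝ) < (k:ℝ) := by exact_mod_cast hk
    have hk0 : ((k:ℝ) / (k:ℝ)) = 1 := div_self hkpos.ne'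
    rw [coc_self] at h
    simpa [hk0, Real.one_rpow] using h
  have hNQ : ∀ k, 1 ≤ k → ∀ v : X, N k (v - P k v) ≤ (1 + D) * N k v := by
    intro k hk v
    have h1 := NF_sub_le (hadd k hk) (hsmul k hk) v (P k v)
    have h2 := hNP k hk v
    have h3 : N k v + D * N k v = (1 + D) * N k v := by ring
    linarith
  constructor
  · rintro y ⟨hy1, S, hS⟩
    have hS0 : 0 ≤ S := le_trans (hnonneg 1 le_rfl (y 1)) (hS 1 le_rfl)
    have hu_ex : ∀ k : ℕ, ∃ u : X, P 1 u = 0 ∧ (2 ≤ k → coc A 1 k u = y k - P k (y k))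
        ∧ (k < 2 → u = 0) := by
      intro k
      by_cases h2 : 2 ≤ k
      · have hPq : P k (y k - P k (y k)) = 0 := by
          have h := congrArg (fun (L : X →L[ℝ] X) => L (y k)) (hPP k (by omega))
          simp only [ContinuousLinearMap.comp_apply] at h
          rw [map_sub, h, sub_self]
        obtain ⟨u, hu1, hu2⟩ := hback k (by omega) _ hPq
        exact ⟨u, hu1, fun _ => hu2, fun h => absurd h2 (by omega)⟩
      · exact ⟨0, by simp, fun h => absurd h h2, fun _ => rfl⟩
    choose u hu1 hu2 hu3 using hu_ex
    have hNuk : ∀ m k : ℕ, 1 ≤ m → m < k →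
        N m (coc A 1 m (u k)) ≤ D * ((m:ℝ) / (k:ℝ)) ^ lam * ((1 + D) * S) := by
      intro m k hm hmk
      have h2k : 2 ≤ k := by omega
      have hqS : N k (y k - P k (y k)) ≤ (1 + D) * S := by
        have hq := hNQ k (by omega) (y k)
        have hSk := hS k (by omega)
        have h1D : (0:ℝ) ≤ 1 + D := by linarith
        nlinarith
      have h := hunst m k hm hmk.le (coc A 1 m (u k)) (hker m hm _ (hu1 k))
      rw [coc_comp_apply A hm hmk.le, hu2 k h2k] at h
      have hr : (0:ℝ) ≤ D * ((m:ℝ) / (k:ℝ)) ^ lam := by positivity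
      exact le_trans h (mul_le_mul_of_nonneg_left hqS hr)
    set K := D * ((1 + D) * S) with hK
    have hK0 : 0 ≤ K := mul_nonneg hD.le (mul_nonneg (by linarith) hS0)
    obtain ⟨c1, C1, hc1, hcC1⟩ := hequiv 1 le_rfl
    set g : ℕ → X := fun k => (k:ℝ)⁻¹ • u k with hg
    have hNg : ∀ m k, 1 ≤ m → m < k →
        N m (coc A 1 m (g k)) ≤ K * ((m:ℝ) ^ lam * (k:ℝ) ^ (-(lam + 1))) := by
      intro m k hm hmk
      have hk1 : 1 ≤ k := by omega
      have hgk : coc A 1 m (g k) = (k:ℝ)⁻¹ • coc A 1 m (u k) := by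
        simp [hg, map_smul]
      rw [hgk, hsmul m hm, abs_of_nonneg (by positivity : (0:ℝ) ≤ (k:ℝ)⁻¹)]
      have h := hNuk m k hm hmk
      calc (k:ℝ)⁻¹ * N m (coc A 1 m (u k))
          ≤ (k:ℝ)⁻¹ * (D * ((m:ℝ) / (k:ℝ)) ^ lam * ((1 + D) * S)) :=
            mul_le_mul_of_nonneg_left h (by positivity)
        _ = K * ((m:ℝ) ^ lam * (k:ℝ) ^ (-(lam + 1))) := by
            rw [show (k:ℝ)⁻¹ * (D * ((m:ℝ) / (k:ℝ)) ^ lam * ((1 + D) * S))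
                = (D * ((1 + D) * S)) * ((k:ℝ)⁻¹ * ((m:ℝ) / (k:ℝ)) ^ lam) from by ring,
              ratio_rpow hm hk1, hK]
    have hNg1 : ∀ k, 2 ≤ k → N 1 (g k) ≤ K * (k:ℝ) ^ (-(lam + 1)) := by
      intro k hk
      have h := hNg 1 k le_rfl (by omega)
      rw [coc_self] at h
      simpa [Real.one_rpow] using h
    have hsummable_aux : Summable (fun k : ℕ => (c1⁻¹ * K) * (k:ℝ) ^ (-(lam + 1))) :=
      (Real.summable_nat_rpow.mpr (by linarith)).mul_left _
    have hgsum : Summable g := by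
      apply Summable.of_norm_bounded_eventually_nat hsummable_aux
      filter_upwards [Filter.eventually_ge_atTop 2] with k hk
      have h1 := (hcC1 (g k)).1
      have h2 := hNg1 k hk
      have h3 : ‖g k‖ ≤ N 1 (g k) / c1 := by
        rw [le_div_iff₀ hc1]
        linarith [h1]
      calc ‖g k‖ ≤ N 1 (g k) / c1 := h3
        _ ≤ (K * (k:ℝ) ^ (-(lam + 1))) / c1 := by
            gcongr
        _ = (c1⁻¹ * K) * (k:ℝ) ^ (-(lam + 1)) := by
            rw [div_eq_inv_mul]; ring
    set x1 : X := -∑' k, g k with hx1def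
    have hP1x1 : P 1 x1 = 0 := by
      rw [hx1def, map_neg, ContinuousLinearMap.map_tsum (P 1) hgsum]
      have hz : ∀ k, P 1 (g k) = 0 := fun k => by
        simp [hg, map_smul, hu1 k, smul_zero]
      simp [hz]
    set x : ℕ → X := sol A y x1 with hx
    have hx1eq : x 1 = x1 := rfl
    have hTx : ∀ m, 1 ≤ m → TOp A x m = y m := by
      intro m hm
      match m, hm with
      | 1, _ => simp [TOp, hy1]
      | (k+2), _ =>
          have hne : ¬ (k + 2 ≤ 1) := by omega
          simp only [TOp, if_neg hne]
          have hx2 : x (k+2) = A (k+1) (x (k+1)) + ((k + 2 : ℕ) : ℝ)⁻¹ • y (k+2) := rfl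
          have hsub : (k + 2) - 1 = k + 1 := by omega
          rw [hsub, hx2, add_sub_cancel_left, smul_smul,
            mul_inv_cancel₀ (by positivity : ((k + 2 : ℕ) : ℝ) ≠ 0), one_smul]
    have hclosed : ∀ m, 1 ≤ m →
        x m = coc A 1 m x1 + ∑ k ∈ Finset.Icc 2 m, (k:ℝ)⁻¹ • coc A k m (y k) := by
      intro m hm
      induction m, hm using Nat.le_induction with
      | base =>
          rw [coc_self]
          simp [hx1eq, Finset.Icc_eq_empty_of_lt]
      | succ m hm ih =>
          obtain ⟨j, rfl⟩ : ∃ j, m = j + 1 := ⟨m - 1, by omega⟩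
          have hstep : x (j+1+1) = A (j+1) (x (j+1)) + ((j + 1 + 1 : ℕ) : ℝ)⁻¹ • y (j+1+1) := rfl
          rw [hstep, ih, map_add, map_sum]
          rw [Finset.sum_Icc_succ_top (by omega : 2 ≤ j + 1 + 1)]
          have hc1' : A (j+1) (coc A 1 (j+1) x1) = coc A 1 (j+1+1) x1 := by
            rw [coc_succ A (by omega : 1 ≤ j + 1)]; rfl
          have hterm : ∀ k ∈ Finset.Icc 2 (j+1),
              A (j+1) ((k:ℝ)⁻¹ • coc A k (j+1) (y k)) = (k:ℝ)⁻¹ • coc A k (j+1+1) (y k) := by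
            intro k hk
            have hkm : k ≤ j + 1 := (Finset.mem_Icc.mp hk).2
            rw [map_smul, coc_succ A hkm]
            rfl
          rw [Finset.sum_congr rfl hterm, hc1', coc_self]
          simp only [ContinuousLinearMap.one_apply]
          abel
    have hbound : ∀ m, 1 ≤ m → N m (x m) ≤ D * S * (1 + lam⁻¹) + K * lam⁻¹ := by
      intro m hm
      have hm0 : (0:ℝ) < m := by exact_mod_cast hm
      have hsum_cg : Summable fun k => coc A 1 m (g k) := hgsum.mapL _
      have hsplit := Summable.sum_add_tsum_nat_add (f := fun k => coc A 1 m (g k)) (m+1) hsum_cg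
      have hfin : ∑ k ∈ Finset.range (m+1), coc A 1 m (g k)
          = ∑ k ∈ Finset.Icc 2 m, (k:ℝ)⁻¹ • coc A k m (y k - P k (y k)) := by
        have hsub : Finset.Icc 2 m ⊆ Finset.range (m+1) := by
          intro k hk
          have := Finset.mem_Icc.mp hk
          exact Finset.mem_range.mpr (by omega)
        rw [← Finset.sum_subset hsub (fun k _ hk => by
          have hk2 : k < 2 := by
            rcases Nat.lt_or_ge k 2 with h | h
            · exact h
            · exact absurd (Finset.mem_Icc.mpr ⟨h, by
                have := Finset.mem_range.mp ‹k ∈ Finset.range (m+1)›; omega⟩) hk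
          rw [hg]
          simp [hu3 k hk2])]
        apply Finset.sum_congr rfl
        intro k hk
        obtain ⟨hk2, hkm⟩ := Finset.mem_Icc.mp hk
        have hgk : coc A 1 m (g k) = (k:ℝ)⁻¹ • coc A 1 m (u k) := by simp [hg, map_smul]
        rw [hgk, ← coc_comp_apply A (by omega : 1 ≤ k) hkm (u k), hu2 k hk2]
      have hxm : x m = (∑ k ∈ Finset.Icc 2 m, (k:ℝ)⁻¹ • coc A k m (P k (y k)))
          - ∑' j, coc A 1 m (g (j + (m+1))) := by
        rw [hclosed m hm, hx1def, map_neg, ContinuousLinearMap.map_tsum (coc A 1 m) hgsum,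
          ← hsplit, hfin]
        have hre : ∑ k ∈ Finset.Icc 2 m, (k:ℝ)⁻¹ • coc A k m (P k (y k))
            = ∑ k ∈ Finset.Icc 2 m, (k:ℝ)⁻¹ • coc A k m (y k)
              - ∑ k ∈ Finset.Icc 2 m, (k:ℝ)⁻¹ • coc A k m (y k - P k (y k)) := by
          rw [← Finset.sum_sub_distrib]
          apply Finset.sum_congr rfl
          intro k _
          rw [← smul_sub, ← map_sub, sub_sub_cancel]
        rw [hre]
        abel
      rw [hxm]
      have htri := NF_sub_le (hadd m hm) (hsmul m hm)
        (∑ k ∈ Finset.Icc 2 m, (k:ℝ)⁻¹ • coc A k m (P k (y k)))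
        (∑' j, coc A 1 m (g (j + (m+1))))
      have hA : N m (∑ k ∈ Finset.Icc 2 m, (k:ℝ)⁻¹ • coc A k m (P k (y k)))
          ≤ D * S * (1 + lam⁻¹) := by
        refine le_trans (NF_sum_le (hadd m hm) (hsmul m hm) _ _) ?_
        have hterm : ∀ k ∈ Finset.Icc 2 m, N m ((k:ℝ)⁻¹ • coc A k m (P k (y k)))
            ≤ (D * S) * ((k:ℝ) ^ (lam - 1) * (m:ℝ) ^ (-lam)) := by
          intro k hk
          obtain ⟨hk2, hkm⟩ := Finset.mem_Icc.mp hk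
          have hk1 : 1 ≤ k := by omega
          rw [hsmul m hm, abs_of_nonneg (by positivity : (0:ℝ) ≤ (k:ℝ)⁻¹)]
          have hst := hstab m k hk1 hkm (y k)
          have hSk := hS k hk1
          have hr : (0:ℝ) ≤ D * ((m:ℝ) / (k:ℝ)) ^ (-lam) := by positivity
          calc (k:ℝ)⁻¹ * N m (coc A k m (P k (y k)))
              ≤ (k:ℝ)⁻¹ * (D * ((m:ℝ) / (k:ℝ)) ^ (-lam) * S) := by
                refine mul_le_mul_of_nonneg_left ?_ (by positivity)
                exact le_trans hst (mul_le_mul_of_nonneg_left hSk hr)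
            _ = (D * S) * ((k:ℝ) ^ (lam - 1) * (m:ℝ) ^ (-lam)) := by
                rw [show (k:ℝ)⁻¹ * (D * ((m:ℝ) / (k:ℝ)) ^ (-lam) * S)
                    = (D * S) * ((k:ℝ)⁻¹ * ((m:ℝ) / (k:ℝ)) ^ (-lam)) from by ring,
                  ratio_rpow' hm hk1]
        refine le_trans (Finset.sum_le_sum hterm) ?_
        rw [← Finset.mul_sum, ← Finset.sum_mul]
        have hH := head_sum hlam hm
        have hmm : (m:ℝ) ^ lam * (m:ℝ) ^ (-lam) = 1 := by
          rw [← Real.rpow_add hm0]; simp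
        have hmn : (0:ℝ) ≤ (m:ℝ) ^ (-lam) := Real.rpow_nonneg hm0.le _
        have hDS : (0:ℝ) ≤ D * S := mul_nonneg hD.le hS0
        calc (D * S) * ((∑ k ∈ Finset.Icc 2 m, (k:ℝ) ^ (lam - 1)) * (m:ℝ) ^ (-lam))
            ≤ (D * S) * (((1 + lam⁻¹) * (m:ℝ) ^ lam) * (m:ℝ) ^ (-lam)) :=
              mul_le_mul_of_nonneg_left (mul_le_mul_of_nonneg_right hH hmn) hDS
          _ = D * S * (1 + lam⁻¹) := by
              rw [mul_assoc (1 + lam⁻¹), hmm]; ring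
      have hB : N m (∑' j, coc A 1 m (g (j + (m+1)))) ≤ K * lam⁻¹ := by
        obtain ⟨cm, Cm, hcm, hcCm⟩ := hequiv m hm
        have hsumt : Summable fun j => coc A 1 m (g (j + (m+1))) :=
          ((summable_nat_add_iff (m+1)).mpr hgsum).mapL _
        refine NF_tsum_le (hadd m hm) (hsmul m hm) (fun z => (hcCm z).2) hsumt
          (b := fun j => K * ((m:ℝ) ^ lam * ((j + m + 1 : ℕ):ℝ) ^ (-(lam + 1)))) ?_ ?_
        · intro j
          exact hNg m (j + m + 1) hm (by omega)
        · intro n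
          have ht := tail_sum hlam hm n
          have hmlam : (0:ℝ) ≤ (m:ℝ) ^ lam := Real.rpow_nonneg hm0.le _
          have hmm : (m:ℝ) ^ lam * (m:ℝ) ^ (-lam) = 1 := by
            rw [← Real.rpow_add hm0]; simp
          calc ∑ j ∈ Finset.range n, K * ((m:ℝ) ^ lam * ((j + m + 1 : ℕ):ℝ) ^ (-(lam + 1)))
              = K * ((m:ℝ) ^ lam * ∑ j ∈ Finset.range n, ((j + m + 1 : ℕ):ℝ) ^ (-(lam + 1))) := by
                rw [Finset.mul_sum, Finset.mul_sum]
            _ ≤ K * ((m:ℝ) ^ lam * (lam⁻¹ * (m:ℝ) ^ (-lam))) := by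
                refine mul_le_mul_of_nonneg_left (mul_le_mul_of_nonneg_left ht hmlam) hK0
            _ = K * lam⁻¹ := by
                rw [show (m:ℝ) ^ lam * (lam⁻¹ * (m:ℝ) ^ (-lam))
                    = lam⁻¹ * ((m:ℝ) ^ lam * (m:ℝ) ^ (-lam)) from by ring, hmm, mul_one]
      linarith
    refine ⟨x, ⟨⟨⟨x1, ?_⟩, ⟨D * S * (1 + lam⁻¹) + K * lam⁻¹, hbound⟩⟩,
      ⟨S, fun m hm => by rw [hTx m hm]; exact hS m hm⟩⟩, hTx⟩
    show x1 - P 1 x1 = x 1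
    rw [hP1x1, sub_zero, hx1eq]
  · rintro x x' ⟨⟨⟨v, hv⟩, Sx, hSx⟩, -⟩ ⟨⟨⟨v', hv'⟩, Sx', hSx'⟩, -⟩ hT m hm
    simp only [] at hv hv'
    have hPid : ∀ w : X, P 1 (P 1 w) = P 1 w := fun w => by
      have := congrArg (fun (L : X →L[ℝ] X) => L w) (hPP 1 le_rfl)
      simpa using this
    have hd1 : P 1 (x 1 - x' 1) = 0 := by
      rw [map_sub, ← hv, ← hv']
      simp [map_sub, hPid]
    have hdrec : ∀ n, 1 ≤ n → x n - x' n = coc A 1 n (x 1 - x' 1) := by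
      intro n hn
      induction n, hn using Nat.le_induction with
      | base => rw [coc_self]; simp
      | succ n hn ih =>
          have hT1 := hT (n+1) (by omega)
          have hne : ¬ (n + 1 ≤ 1) := by omega
          simp only [TOp, if_neg hne] at hT1
          have hcast : (n + 1) - 1 = n := by omega
          rw [hcast] at hT1
          have hn0 : ((n+1:ℕ):ℝ) ≠ 0 := by exact_mod_cast (Nat.succ_ne_zero n)
          have heq : x (n+1) - A n (x n) = x' (n+1) - A n (x' n) :=
            smul_right_injective X hn0 hT1
          have heq2 : x (n+1) - x' (n+1) = A n (x n) - A n (x' n) := by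
            rw [sub_eq_sub_iff_sub_eq_sub] at heq
            exact heq
          rw [coc_succ A hn]
          simp only [ContinuousLinearMap.comp_apply]
          rw [← ih, map_sub, heq2]
    have hbd : ∀ n, 1 ≤ n → N n (x n - x' n) ≤ Sx + Sx' := fun n hn =>
      le_trans (NF_sub_le (hadd n hn) (hsmul n hn) _ _)
        (by linarith [hSx n hn, hSx' n hn])
    have hkey : ∀ n : ℕ, 1 ≤ n →
        N 1 (x 1 - x' 1) ≤ D * ((1:ℝ) / (n:ℝ)) ^ lam * (Sx + Sx') := by
      intro n hn
      have h := hunst 1 n le_rfl hn (x 1 - x' 1) hd1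
      rw [← hdrec n hn] at h
      have hr : (0:ℝ) ≤ D * ((1:ℝ) / (n:ℝ)) ^ lam := by positivity
      calc N 1 (x 1 - x' 1) ≤ D * (((1:ℕ):ℝ) / (n:ℝ)) ^ lam * N n (x n - x' n) := h
        _ = D * ((1:ℝ) / (n:ℝ)) ^ lam * N n (x n - x' n) := by norm_num
        _ ≤ D * ((1:ℝ) / (n:ℝ)) ^ lam * (Sx + Sx') :=
            mul_le_mul_of_nonneg_left (hbd n hn) hr
    have hlim : Filter.Tendsto (fun n : ℕ => D * ((1:ℝ) / (n:ℝ)) ^ lam * (Sx + Sx'))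
        Filter.atTop (nhds 0) := by
      have h1 : Filter.Tendsto (fun n : ℕ => ((n:ℝ)) ^ lam) Filter.atTop Filter.atTop :=
        (tendsto_rpow_atTop hlam).comp tendsto_natCast_atTop_atTop
      have h2 : Filter.Tendsto (fun n : ℕ => (((n:ℝ)) ^ lam)⁻¹) Filter.atTop (nhds 0) :=
        h1.inv_tendsto_atTop
      have h3 : (fun n : ℕ => D * ((1:ℝ) / (n:ℝ)) ^ lam * (Sx + Sx'))
          = fun n : ℕ => D * (((n:ℝ)) ^ lam)⁻¹ * (Sx + Sx') := by
        funext n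
        rw [one_div, Real.inv_rpow (by positivity)]
      rw [h3]
      have h4 := (h2.const_mul D).mul_const (Sx + Sx')
      simpa using h4
    have hN10 : N 1 (x 1 - x' 1) ≤ 0 :=
      ge_of_tendsto hlim (Filter.eventually_atTop.2 ⟨1, fun n hn => hkey n hn⟩)
    have hzero : x 1 - x' 1 = 0 := by
      obtain ⟨c1, C1, hc1, hcC1⟩ := hequiv 1 le_rfl
      have h1 := (hcC1 (x 1 - x' 1)).1
      have hnorm : ‖x 1 - x' 1‖ ≤ 0 := by nlinarith [norm_nonneg (x 1 - x' 1)]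
      simpa using norm_le_zero_iff.mp hnorm
    have hfin := hdrec m hm
    rw [hzero, map_zero] at hfin
    exact sub_eq_zero.mp hfin
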